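/- Let f(x) = |sin x|^α / cos x on (0, π/2) with α ≥ 0. Then f'(x)/f(x) = α·cot x + tan x, and hence (f'/f)(x)² − (f'/f)'(x) = (3α − 1 + (α−1)² cos² x)/sin² x. In particular, the Gaussian curvature of the metric dx⊗dx + (cos²x/sin^{2α}x) dy⊗dy equals −( (f'/f)' − (f'/f)² ) = (3α − 1 + (α−1)² cos² x)/sin² x, which is strictly positive for all x ∈ (0, π/2) whenever α ≥ 1/2. -/

import Mathlib

open Real

lemma grushin_aux (α : ℝ) (f : ℝ → ℝ)
    (hf : f = fun x => |Real.sin x| ^ α / Real.cos x) :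
    ∀ x ∈ Set.Ioo 0 (π / 2),
      deriv f x / f x = α * (Real.cos x / Real.sin x) + Real.tan x := by
  intro x hx
  obtain ⟨hx0, hx1⟩ := hx
  have hs : 0 < Real.sin x := Real.sin_pos_of_pos_of_lt_pi hx0 (hx1.trans (by linarith [Real.pi_pos]))
  have hc : 0 < Real.cos x := Real.cos_pos_of_mem_Ioo ⟨by linarith [Real.pi_pos], hx1⟩
  set g : ℝ → ℝ := fun t => Real.sin t ^ α / Real.cos t with hg
  have heq : f =ᶠ[nhds x] g := by
    filter_upwards [isOpen_Ioo.mem_nhds (⟨hx0, hx1⟩ : x ∈ Set.Ioo 0 (π/2))] with t ht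
    have hst : 0 < Real.sin t := Real.sin_pos_of_pos_of_lt_pi ht.1 (ht.2.trans (by linarith [Real.pi_pos]))
    simp [hf, hg, abs_of_pos hst]
  have hu : HasDerivAt (fun t => Real.sin t ^ α) (α * Real.sin x ^ (α - 1) * Real.cos x) x := by
    have := (Real.hasDerivAt_sin x).rpow_const (p := α) (Or.inl hs.ne')
    convert this using 1; ring
  have hd : HasDerivAt g
      ((α * Real.sin x ^ (α - 1) * Real.cos x * Real.cos x -
        Real.sin x ^ α * (-Real.sin x)) / Real.cos x ^ 2) x :=
    hu.div (Real.hasDerivAt_cos x) hc.ne'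
  have hderiv : deriv f x = (α * Real.sin x ^ (α - 1) * Real.cos x * Real.cos x -
        Real.sin x ^ α * (-Real.sin x)) / Real.cos x ^ 2 := by
    rw [heq.deriv_eq, hd.deriv]
  have hfx : f x = Real.sin x ^ α / Real.cos x := by
    simp [hf, abs_of_pos hs]
  have hpow : Real.sin x ^ α = Real.sin x ^ (α - 1) * Real.sin x := by
    rw [← Real.rpow_add_one hs.ne']; ring_nf
  have hpowpos : 0 < Real.sin x ^ (α - 1) := Real.rpow_pos_of_pos hs _
  rw [hderiv, hfx, Real.tan_eq_sin_div_cos, hpow]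
  field_simp
  ring

theorem grushin_hemisphere_curvature (α : ℝ) (hα : 0 ≤ α)
    (f : ℝ → ℝ) (hf : f = fun x => |Real.sin x| ^ α / Real.cos x) :
    ∀ x ∈ Set.Ioo 0 (π / 2),
      deriv f x / f x = α * (Real.cos x / Real.sin x) + Real.tan x ∧
      (deriv f x / f x) ^ 2 - deriv (fun t => deriv f t / f t) x =
        (3 * α - 1 + (α - 1) ^ 2 * Real.cos x ^ 2) / Real.sin x ^ 2 ∧
      (1 / 2 ≤ α →
        0 < (3 * α - 1 + (α - 1) ^ 2 * Real.cos x ^ 2) / Real.sin x ^ 2) := by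
  intro x hx
  obtain ⟨hx0, hx1⟩ := hx
  have hs : 0 < Real.sin x := Real.sin_pos_of_pos_of_lt_pi hx0 (hx1.trans (by linarith [Real.pi_pos]))
  have hc : 0 < Real.cos x := Real.cos_pos_of_mem_Ioo ⟨by linarith [Real.pi_pos], hx1⟩
  have h1 := grushin_aux α f hf x ⟨hx0, hx1⟩
  refine ⟨h1, ?_, ?_⟩
  · -- second derivative part
    have heq : (fun t => deriv f t / f t) =ᶠ[nhds x]
        (fun t => α * (Real.cos t / Real.sin t) + Real.tan t) := by
      filter_upwards [isOpen_Ioo.mem_nhds (⟨hx0, hx1⟩ : x ∈ Set.Ioo 0 (π/2))] with t ht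
      exact grushin_aux α f hf t ht
    have hcot : HasDerivAt (fun t => Real.cos t / Real.sin t)
        ((-Real.sin x * Real.sin x - Real.cos x * Real.cos x) / Real.sin x ^ 2) x :=
      (Real.hasDerivAt_cos x).div (Real.hasDerivAt_sin x) hs.ne'
    have htan : HasDerivAt Real.tan (1 / Real.cos x ^ 2) x := Real.hasDerivAt_tan hc.ne'
    have hd : HasDerivAt (fun t => α * (Real.cos t / Real.sin t) + Real.tan t)
        (α * ((-Real.sin x * Real.sin x - Real.cos x * Real.cos x) / Real.sin x ^ 2)
          + 1 / Real.cos x ^ 2) x := (hcot.const_mul α).add htan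
    rw [heq.deriv_eq, hd.deriv, h1, Real.tan_eq_sin_div_cos]
    have hpy : Real.sin x ^ 2 + Real.cos x ^ 2 = 1 := Real.sin_sq_add_cos_sq x
    field_simp
    linear_combination (
      (Real.sin x ^ 2 + (3 * α - 1) * Real.cos x ^ 2)) * hpy
  · intro hhalf
    have hnum : 0 < 3 * α - 1 + (α - 1) ^ 2 * Real.cos x ^ 2 := by
      nlinarith [sq_nonneg ((α - 1) * Real.cos x)]
    positivity
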